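/- Let F(x) = lim_s F_s(x), F_s(x) ∈ {0,1}, be a computable approximation with 1 ≤ |{s : F_s(x) ≠ F_{s+1}(x)}| ≤ n+1 for all x. For i ≥ 1 define F̃^i = {⟨y,t⟩ : F_t(y) = F(y), F_{t+1}(y) ≠ F_t(y), c_t(y) = i}, where c_t(y) = |{s ≤ t : F_s(y) ≠ F_{s+1}(y)}|. Then F̃^{n+1} = ∅ and for each i ≥ 1 the set F̃^i is c.e. relative to F̃^{i+1}. -/

import Mathlib

open Classical in
/-- Characteristic function of a set of naturals. -/
noncomputable def chi (A : Set ℕ) : ℕ → ℕ := fun n => if n ∈ A then 1 else 0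

/-- Partial functions computable relative to an oracle `O : ℕ → ℕ`. -/
inductive RecursiveInOracle (O : ℕ → ℕ) : (ℕ →. ℕ) → Prop
  | zero : RecursiveInOracle O (pure 0)
  | succ : RecursiveInOracle O Nat.succ
  | left : RecursiveInOracle O ↑fun n : ℕ => n.unpair.1
  | right : RecursiveInOracle O ↑fun n : ℕ => n.unpair.2
  | oracle : RecursiveInOracle O ↑O
  | pair {f g} : RecursiveInOracle O f → RecursiveInOracle O g →
      RecursiveInOracle O fun n => Nat.pair <$> f n <*> g n
  | comp {f g} : RecursiveInOracle O f → RecursiveInOracle O g →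
      RecursiveInOracle O fun n => g n >>= f
  | prec {f g} : RecursiveInOracle O f → RecursiveInOracle O g →
      RecursiveInOracle O (Nat.unpaired fun a n =>
        n.rec (f a) fun y IH => do let i ← IH; g (Nat.pair a (Nat.pair y i)))
  | rfind {f} : RecursiveInOracle O f →
      RecursiveInOracle O fun a => Nat.rfind fun n => (fun m => m = 0) <$> f (Nat.pair a n)

/-- Turing reducibility between sets of naturals: `A ≤_T B`. -/
def SetTuringRed (A B : Set ℕ) : Prop := RecursiveInOracle (chi B) ↑(chi A)

/-- `A` is computably enumerable. -/
def CE (A : Set ℕ) : Prop := ∃ f : ℕ →. ℕ, Nat.Partrec f ∧ ∀ n, n ∈ A ↔ (f n).Dom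

/-- `A` is c.e. relative to the oracle `O`. -/
def CEIn (O : ℕ → ℕ) (A : Set ℕ) : Prop :=
  ∃ f : ℕ →. ℕ, RecursiveInOracle O f ∧ ∀ n, n ∈ A ↔ (f n).Dom

/-- A uniformly c.e. sequence of sets. -/
def UnifCE (A : ℕ → Set ℕ) : Prop :=
  ∃ f : ℕ →. ℕ, Nat.Partrec f ∧ ∀ i x, x ∈ A i ↔ (f (Nat.pair i x)).Dom

/-! ### Auxiliary machinery -/

/-- counts the changes of `Fa · y` up to stage `t` (inclusive). -/
def ccF (Fa : ℕ → ℕ → ℕ) (y t : ℕ) : ℕ :=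
  Nat.rec (if Fa 0 y = Fa 1 y then 0 else 1)
    (fun t' IH => IH + if Fa (t' + 1) y = Fa (t' + 1 + 1) y then 0 else 1) t

theorem ccF_computable {Fa : ℕ → ℕ → ℕ} (h : Computable fun p : ℕ × ℕ => Fa p.1 p.2) :
    Computable fun p : ℕ × ℕ => ccF Fa p.1 p.2 := by
  have hFa : Computable₂ Fa := h
  have hchg : Computable fun p : ℕ × ℕ => (if Fa p.2 p.1 = Fa (p.2 + 1) p.1 then 0 else 1 : ℕ) := by
    have hb : Computable fun p : ℕ × ℕ => decide (Fa p.2 p.1 = Fa (p.2 + 1) p.1) :=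
      Primrec.eq.decide.to_comp.comp (hFa.comp Computable.snd Computable.fst)
        (hFa.comp (Computable.succ.comp Computable.snd) Computable.fst)
    exact (Computable.cond hb (Computable.const 0) (Computable.const 1)).of_eq fun p => by
      by_cases hh : Fa p.2 p.1 = Fa (p.2 + 1) p.1 <;> simp [hh]
  have := Computable.nat_rec (f := fun p : ℕ × ℕ => p.2)
    (g := fun p : ℕ × ℕ => (if Fa 0 p.1 = Fa 1 p.1 then 0 else 1 : ℕ))
    (h := fun (p : ℕ × ℕ) (q : ℕ × ℕ) =>
      q.2 + if Fa (q.1 + 1) p.1 = Fa (q.1 + 1 + 1) p.1 then 0 else 1)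
    Computable.snd
    (hchg.comp (Computable.fst.pair (Computable.const 0)))
    (Primrec.nat_add.to_comp.comp (Computable.snd.comp Computable.snd)
      (hchg.comp ((Computable.fst.comp Computable.fst).pair
        (Computable.succ.comp (Computable.fst.comp Computable.snd)))))
  exact this.of_eq fun a => rfl

/-- the oracle-free part of the enumeration test. -/
def testB (Fa : ℕ → ℕ → ℕ) (i : ℕ) (p : ℕ) : Bool :=
  (!decide (Fa p.unpair.1.unpair.2 p.unpair.1.unpair.1 =
      Fa (p.unpair.1.unpair.2 + 1) p.unpair.1.unpair.1)) &&
  decide (ccF Fa p.unpair.1.unpair.1 p.unpair.1.unpair.2 = i) &&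
  decide (p.unpair.1.unpair.2 < p.unpair.2) &&
  (!decide (Fa p.unpair.2 p.unpair.1.unpair.1 = Fa (p.unpair.2 + 1) p.unpair.1.unpair.1)) &&
  decide (ccF Fa p.unpair.1.unpair.1 p.unpair.2 = i + 1)

theorem testB_computable {Fa : ℕ → ℕ → ℕ} (h : Computable fun p : ℕ × ℕ => Fa p.1 p.2)
    (i : ℕ) : Computable (testB Fa i) := by
  have hFa : Computable₂ Fa := h
  have hcc : Computable₂ (ccF Fa) := ccF_computable h
  have cy : Computable fun p : ℕ => p.unpair.1.unpair.1 :=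
    (Primrec.fst.comp (Primrec.unpair.comp (Primrec.fst.comp Primrec.unpair))).to_comp
  have ct : Computable fun p : ℕ => p.unpair.1.unpair.2 :=
    (Primrec.snd.comp (Primrec.unpair.comp (Primrec.fst.comp Primrec.unpair))).to_comp
  have cs : Computable fun p : ℕ => p.unpair.2 :=
    (Primrec.snd.comp Primrec.unpair).to_comp
  have b1 : Computable fun p : ℕ => !decide (Fa p.unpair.1.unpair.2 p.unpair.1.unpair.1 =
      Fa (p.unpair.1.unpair.2 + 1) p.unpair.1.unpair.1) :=
    Primrec.not.to_comp.comp (Primrec.eq.decide.to_comp.comp (hFa.comp ct cy)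
      (hFa.comp (Computable.succ.comp ct) cy))
  have b2 : Computable fun p : ℕ => decide (ccF Fa p.unpair.1.unpair.1 p.unpair.1.unpair.2 = i) :=
    Primrec.eq.decide.to_comp.comp (hcc.comp cy ct) (Computable.const i)
  have b3 : Computable fun p : ℕ => decide (p.unpair.1.unpair.2 < p.unpair.2) :=
    Primrec.nat_lt.decide.to_comp.comp ct cs
  have b4 : Computable fun p : ℕ => !decide (Fa p.unpair.2 p.unpair.1.unpair.1 =
      Fa (p.unpair.2 + 1) p.unpair.1.unpair.1) :=
    Primrec.not.to_comp.comp (Primrec.eq.decide.to_comp.comp (hFa.comp cs cy)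
      (hFa.comp (Computable.succ.comp cs) cy))
  have b5 : Computable fun p : ℕ => decide (ccF Fa p.unpair.1.unpair.1 p.unpair.2 = i + 1) :=
    Primrec.eq.decide.to_comp.comp (hcc.comp cy cs) (Computable.const (i + 1))
  exact Primrec.and.to_comp.comp (Primrec.and.to_comp.comp
    (Primrec.and.to_comp.comp (Primrec.and.to_comp.comp b1 b2) b3) b4) b5

theorem RecursiveInOracle.of_partrec {O : ℕ → ℕ} {f : ℕ →. ℕ} (h : Nat.Partrec f) :
    RecursiveInOracle O f := by
  induction h with
  | zero => exact .zero
  | succ => exact .succ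
  | left => exact .left
  | right => exact .right
  | pair _ _ ih1 ih2 => exact .pair ih1 ih2
  | comp _ _ ih1 ih2 => exact .comp ih1 ih2
  | prec _ _ ih1 ih2 => exact .prec ih1 ih2
  | rfind _ ih => exact .rfind ih

theorem RecursiveInOracle.of_eq {O : ℕ → ℕ} {f g : ℕ →. ℕ} (h : RecursiveInOracle O f)
    (e : ∀ n, f n = g n) : RecursiveInOracle O g := funext e ▸ h

/-- the full test : oracle-free part plus oracle query. -/
def testN' (g1 : ℕ → ℕ) (O : ℕ → ℕ) (p : ℕ) : ℕ :=
  g1 p + O (Nat.pair p.unpair.1.unpair.1 p.unpair.2)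

theorem testN'_rec {O : ℕ → ℕ} {g1 : ℕ → ℕ} (hg1 : Computable g1) :
    RecursiveInOracle O ↑(testN' g1 O) := by
  have hu : Nat.Partrec ↑(fun p : ℕ => Nat.pair p.unpair.1.unpair.1 p.unpair.2) :=
    Partrec.nat_iff.1 (Primrec.to_comp (Primrec₂.natPair.comp
      (Primrec.fst.comp (Primrec.unpair.comp (Primrec.fst.comp Primrec.unpair)))
      (Primrec.snd.comp Primrec.unpair)))
  have hOu : RecursiveInOracle O ↑(fun p : ℕ => O (Nat.pair p.unpair.1.unpair.1 p.unpair.2)) :=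
    (RecursiveInOracle.comp .oracle (.of_partrec hu)).of_eq fun n => by
      simp [PFun.coe_val, Part.bind_eq_bind, Part.bind_some]
      exact Part.bind_some _ _
  have hadd : RecursiveInOracle O ↑(Nat.unpaired (· + ·)) :=
    .of_partrec (Nat.Partrec.of_primrec Nat.Primrec.add)
  have hg1' : RecursiveInOracle O ↑g1 := .of_partrec (Partrec.nat_iff.1 hg1)
  exact (RecursiveInOracle.comp hadd (RecursiveInOracle.pair hg1' hOu)).of_eq fun n => by
    simp [PFun.coe_val, Part.bind_eq_bind, Part.bind_some, Seq.seq, testN']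
    exact (Part.bind_some _ _).trans (by simp [PFun.coe_val])

theorem chi_eq_zero_iff (A : Set ℕ) (x : ℕ) : chi A x = 0 ↔ x ∉ A := by
  unfold chi; split_ifs with h <;> simp [h]

theorem stmt10 (n : ℕ) (F : ℕ → ℕ) (Fa : ℕ → ℕ → ℕ)
    (hcomp : Computable fun p : ℕ × ℕ => Fa p.1 p.2)
    (hval : ∀ s x, Fa s x ≤ 1)
    (hlim : ∀ x, ∃ N, ∀ s ≥ N, Fa s x = F x)
    (hchg : ∀ x, {s | Fa s x ≠ Fa (s + 1) x}.Finite ∧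
      1 ≤ {s | Fa s x ≠ Fa (s + 1) x}.ncard ∧
      {s | Fa s x ≠ Fa (s + 1) x}.ncard ≤ n + 1)
    (c : ℕ → ℕ → ℕ)
    (hc : ∀ t y, c t y = {s | s ≤ t ∧ Fa s y ≠ Fa (s + 1) y}.ncard)
    (Ft : ℕ → Set ℕ)
    (hFt : ∀ i, Ft i = {m : ℕ | ∃ y t, m = Nat.pair y t ∧
      Fa t y = F y ∧ Fa (t + 1) y ≠ Fa t y ∧ c t y = i}) :
    Ft (n + 1) = ∅ ∧ ∀ i, 1 ≤ i → CEIn (chi (Ft (i + 1))) (Ft i) := by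
  classical
  -- Fa is constant on change-free intervals
  have hconst : ∀ y a b, a ≤ b → (∀ s, a ≤ s → s < b → Fa s y = Fa (s + 1) y) →
      Fa a y = Fa b y := by
    intro y a b hab hno
    induction b, hab using Nat.le_induction with
    | base => rfl
    | succ b hb ih =>
      rw [ih fun s hs hsb => hno s hs (by omega)]
      exact hno b hb (by omega)
  have hstab : ∀ y a, (∀ s, a ≤ s → Fa s y = Fa (s + 1) y) → Fa a y = F y := by
    intro y a hno
    obtain ⟨N, hN⟩ := hlim y
    rcases le_total a N with h | h
    · rw [hconst y a N h fun s hs _ => hno s hs]; exact hN N le_rfl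
    · exact hN a h
  have hF1 : ∀ y, F y ≤ 1 := by
    intro y; obtain ⟨N, hN⟩ := hlim y; rw [← hN N le_rfl]; exact hval N y
  have hcard : ∀ t y,
      c t y = ((Finset.range (t + 1)).filter fun s => Fa s y ≠ Fa (s + 1) y).card := by
    intro t y
    rw [hc, ← Set.ncard_coe_finset]
    congr 1
    ext s
    simp [Nat.lt_succ_iff]
  -- part 1
  have hpart1 : Ft (n + 1) = ∅ := by
    rw [hFt]
    ext m
    simp only [Set.mem_setOf_eq, Set.mem_empty_iff_false, iff_false]
    rintro ⟨y, t, -, h1, h2, h3⟩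
    have hsub : {s | s ≤ t ∧ Fa s y ≠ Fa (s + 1) y} ⊆ {s | Fa s y ≠ Fa (s + 1) y} :=
      fun s hs => hs.2
    have heq : {s | s ≤ t ∧ Fa s y ≠ Fa (s + 1) y} = {s | Fa s y ≠ Fa (s + 1) y} :=
      Set.eq_of_subset_of_ncard_le hsub (by rw [← hc, h3]; exact (hchg y).2.2) (hchg y).1
    have hno : ∀ s, t + 1 ≤ s → Fa s y = Fa (s + 1) y := by
      intro s hs
      by_contra hne
      have hmem : s ∈ {s | s ≤ t ∧ Fa s y ≠ Fa (s + 1) y} := by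
        rw [heq]; exact hne
      have : s ≤ t := hmem.1
      omega
    exact h2 ((hstab y (t + 1) hno).trans h1.symm)
  -- membership unfolding
  have hmem0 : ∀ j y t, Nat.pair y t ∈ Ft j ↔
      Fa t y = F y ∧ Fa (t + 1) y ≠ Fa t y ∧ c t y = j := by
    intro j y t
    rw [hFt]
    simp only [Set.mem_setOf_eq]
    constructor
    · rintro ⟨y', t', hp, h⟩
      obtain ⟨rfl, rfl⟩ := Nat.pair_eq_pair.mp hp
      exact h
    · intro h; exact ⟨y, t, rfl, h⟩
  -- counting split
  have hsplit : ∀ y t s, t < s → c s y = c t y +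
      ((Finset.Ico (t + 1) (s + 1)).filter fun u => Fa u y ≠ Fa (u + 1) y).card := by
    intro y t s hts
    rw [hcard, hcard]
    have hr : Finset.range (s + 1) = Finset.range (t + 1) ∪ Finset.Ico (t + 1) (s + 1) := by
      rw [Finset.range_eq_Ico, Finset.range_eq_Ico,
        Finset.Ico_union_Ico_eq_Ico (by omega) (by omega)]
    have hdisj : Disjoint (Finset.range (t + 1)) (Finset.Ico (t + 1) (s + 1)) := by
      rw [Finset.range_eq_Ico]
      exact Finset.Ico_disjoint_Ico_consecutive 0 (t + 1) (s + 1)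
    rw [hr, Finset.filter_union,
      Finset.card_union_of_disjoint (Finset.disjoint_filter_filter hdisj)]
  -- next change
  have hnext : ∀ y t j, Fa t y ≠ Fa (t + 1) y → Fa t y = F y → c t y = j →
      ∃ s, t < s ∧ Fa s y ≠ Fa (s + 1) y ∧ c s y = j + 1 ∧ Fa s y ≠ F y := by
    intro y t j hcht hFt0 hct
    have hex : ∃ s, t < s ∧ Fa s y ≠ Fa (s + 1) y := by
      by_contra hno
      push_neg at hno
      have := hstab y (t + 1) fun s hs => hno s (by omega)
      exact hcht (hFt0.trans this.symm)
    obtain ⟨s0, hs0⟩ := hex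
    have hP : ∃ s, t < s ∧ Fa s y ≠ Fa (s + 1) y := ⟨s0, hs0⟩
    set s := Nat.find hP with hsdef
    have hPs : t < s ∧ Fa s y ≠ Fa (s + 1) y := Nat.find_spec hP
    have hmin : ∀ u, u < s → ¬(t < u ∧ Fa u y ≠ Fa (u + 1) y) := fun u hu => Nat.find_min hP hu
    have hsingle : ((Finset.Ico (t + 1) (s + 1)).filter fun u => Fa u y ≠ Fa (u + 1) y)
        = {s} := by
      ext u
      simp only [Finset.mem_filter, Finset.mem_Ico, Finset.mem_singleton]
      constructor
      · rintro ⟨⟨hu1, hu2⟩, hu3⟩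
        by_contra hne
        exact hmin u (by omega) ⟨by omega, hu3⟩
      · rintro rfl
        exact ⟨⟨by omega, by omega⟩, hPs.2⟩
    have hcs : c s y = j + 1 := by
      rw [hsplit y t s hPs.1, hct, hsingle, Finset.card_singleton]
    have hFa' : Fa (t + 1) y = Fa s y :=
      hconst y (t + 1) s (by omega) fun u hu hus => by
        by_contra hne
        exact hmin u hus ⟨by omega, hne⟩
    refine ⟨s, hPs.1, hPs.2, hcs, ?_⟩
    intro hFs
    exact hcht (hFt0.trans (hFs.symm.trans hFa'.symm))
  -- the characterization of membership relative to the next level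
  have hchar : ∀ j y t, Nat.pair y t ∈ Ft j ↔
      (¬Fa t y = Fa (t + 1) y ∧ c t y = j ∧ ∃ s, t < s ∧ ¬Fa s y = Fa (s + 1) y ∧
        c s y = j + 1 ∧ Nat.pair y s ∉ Ft (j + 1)) := by
    intro j y t
    rw [hmem0]
    constructor
    · rintro ⟨h1, h2, h3⟩
      have hcht : Fa t y ≠ Fa (t + 1) y := fun h => h2 h.symm
      obtain ⟨s, hts, hchs, hcs, hFs⟩ := hnext y t j hcht h1 h3
      refine ⟨hcht, h3, s, hts, hchs, hcs, ?_⟩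
      rw [hmem0]
      rintro ⟨hdead, -, -⟩
      exact hFs hdead
    · rintro ⟨h1, h2, s, hts, hchs, hcs, hnot⟩
      have hFsne : Fa s y ≠ F y := by
        intro hFs
        exact hnot ((hmem0 (j + 1) y s).mpr ⟨hFs, fun h => hchs h.symm, hcs⟩)
      have hone : ((Finset.Ico (t + 1) (s + 1)).filter fun u => Fa u y ≠ Fa (u + 1) y).card
          = 1 := by
        have := hsplit y t s hts; omega
      obtain ⟨a, ha⟩ := Finset.card_eq_one.mp hone
      have hsa : s = a := by
        have hmem : s ∈ (Finset.Ico (t + 1) (s + 1)).filter fun u => Fa u y ≠ Fa (u + 1) y := by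
          simp only [Finset.mem_filter, Finset.mem_Ico]
          exact ⟨⟨by omega, by omega⟩, hchs⟩
        rw [ha] at hmem
        simpa using hmem
      have hnomid : ∀ u, t + 1 ≤ u → u < s → Fa u y = Fa (u + 1) y := by
        intro u hu hus
        by_contra hne
        have hmem : u ∈ (Finset.Ico (t + 1) (s + 1)).filter fun v => Fa v y ≠ Fa (v + 1) y := by
          simp only [Finset.mem_filter, Finset.mem_Ico]
          exact ⟨⟨hu, by omega⟩, hne⟩
        rw [ha] at hmem
        have : u = a := by simpa using hmem
        omega
      have hFa' : Fa (t + 1) y = Fa s y := hconst y (t + 1) s (by omega) hnomid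
      have hts' : Fa t y ≠ Fa s y := by
        rw [← hFa']; exact h1
      have e1 := hval t y
      have e2 := hval s y
      have e3 := hF1 y
      have hFty : Fa t y = F y := by omega
      exact ⟨hFty, fun h => h1 h.symm, h2⟩
  refine ⟨hpart1, ?_⟩
  intro i _
  -- the change-count functions agree
  have hccF : ∀ y t, c t y = ccF Fa y t := by
    intro y t
    induction t with
    | zero =>
      rw [hcard]
      by_cases h : Fa 0 y = Fa 1 y <;>
        simp [ccF, Finset.range_one, Finset.filter_singleton, h]
    | succ t ih =>
      have hstep : ccF Fa y (t + 1) =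
          ccF Fa y t + if Fa (t + 1) y = Fa (t + 1 + 1) y then 0 else 1 := rfl
      rw [hstep, ← ih, hcard, hcard, Finset.range_add_one, Finset.filter_insert]
      by_cases h : Fa (t + 1) y = Fa (t + 1 + 1) y
      · simp [h]
      · rw [if_pos h, if_neg h, Finset.card_insert_of_notMem (by simp)]
  set O : ℕ → ℕ := chi (Ft (i + 1)) with hOdef
  set g1 : ℕ → ℕ := fun p => bif testB Fa i p then 0 else 1 with hg1def
  have hg1 : Computable g1 :=
    Computable.cond (testB_computable hcomp i) (Computable.const 0) (Computable.const 1)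
  refine ⟨fun a => Nat.rfind fun k =>
      (fun m => m = 0) <$> (↑(testN' g1 O) : ℕ →. ℕ) (Nat.pair a k),
    RecursiveInOracle.rfind (testN'_rec hg1), ?_⟩
  intro m
  have hdom : (Nat.rfind fun k =>
      (fun m => m = 0) <$> (↑(testN' g1 O) : ℕ →. ℕ) (Nat.pair m k)).Dom ↔
      ∃ s, testN' g1 O (Nat.pair m s) = 0 := by
    refine Nat.rfind_dom.trans ?_
    constructor
    · rintro ⟨s, hs, -⟩
      refine ⟨s, ?_⟩
      simpa [PFun.coe_val] using hs
    · rintro ⟨s, hs⟩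
      exact ⟨s, by simp [PFun.coe_val, hs], fun {u} _ => by simp [PFun.coe_val]⟩
  have hbif : ∀ b : Bool, (bif b then 0 else 1 : ℕ) = 0 ↔ b = true := by decide
  have htest0 : ∀ s, testN' g1 O (Nat.pair m s) = 0 ↔
      ((¬Fa m.unpair.2 m.unpair.1 = Fa (m.unpair.2 + 1) m.unpair.1 ∧
        c m.unpair.2 m.unpair.1 = i ∧ m.unpair.2 < s ∧
        ¬Fa s m.unpair.1 = Fa (s + 1) m.unpair.1 ∧ c s m.unpair.1 = i + 1) ∧
        Nat.pair m.unpair.1 s ∉ Ft (i + 1)) := by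
    intro s
    have h0 : testN' g1 O (Nat.pair m s) =
        (bif testB Fa i (Nat.pair m s) then 0 else 1) +
          chi (Ft (i + 1)) (Nat.pair m.unpair.1 s) := by
      simp [testN', hg1def, hOdef, Nat.unpair_pair]
    rw [h0, Nat.add_eq_zero, hbif, chi_eq_zero_iff]
    have htb : testB Fa i (Nat.pair m s) = true ↔
        (¬Fa m.unpair.2 m.unpair.1 = Fa (m.unpair.2 + 1) m.unpair.1 ∧
          c m.unpair.2 m.unpair.1 = i ∧ m.unpair.2 < s ∧
          ¬Fa s m.unpair.1 = Fa (s + 1) m.unpair.1 ∧ c s m.unpair.1 = i + 1) := by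
      simp only [testB, Nat.unpair_pair, Bool.and_eq_true, Bool.not_eq_true',
        decide_eq_false_iff_not, decide_eq_true_eq, ← hccF]
      tauto
    rw [htb]
  rw [hdom]
  conv_lhs => rw [← Nat.pair_unpair m]
  rw [hchar i m.unpair.1 m.unpair.2]
  constructor
  · rintro ⟨h1, h2, s, h3, h4, h5, h6⟩
    exact ⟨s, (htest0 s).mpr ⟨⟨h1, h2, h3, h4, h5⟩, h6⟩⟩
  · rintro ⟨s, hs⟩
    obtain ⟨⟨h1, h2, h3, h4, h5⟩, h6⟩ := (htest0 s).mp hs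
    exact ⟨h1, h2, s, h3, h4, h5, h6⟩
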